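/- Let I₀ > 0, K > 0, α > 0, β > 0, σ ∈ ℝ, μ ∈ ℝ and t ≥ 0 be real numbers, and let γ denote the standard Gaussian measure N(0,1) on ℝ. Then ∫ z, (I₀/K)·(exp((K·μ − K²·σ²/2)·t + K·σ·√t·z) − 1) + (α·I₀/(β·K))·(exp((−β·K·μ − β²·K²·σ²/2)·t − β·K·σ·√t·z) − 1) dγ(z) = (I₀/K)·(exp(K·μ·t) − 1 + (α/β)·(exp(−β·K·μ·t) − 1)). -/

import Mathlib

open MeasureTheory ProbabilityTheory

lemma real_gauss_integral (a : ℝ) :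
    ∫ x : ℝ, Real.exp (-x ^ 2 / 2 + a * x)
      = Real.sqrt (2 * Real.pi) * Real.exp (a ^ 2 / 2) := by
  have h1 : ∀ x : ℝ, Real.exp (-x ^ 2 / 2 + a * x)
      = Real.exp (a ^ 2 / 2) * Real.exp (-(1/2) * (x - a) ^ 2) := by
    intro x; rw [← Real.exp_add]; ring_nf
  simp_rw [h1]
  rw [integral_const_mul,
    integral_sub_right_eq_self (fun x => Real.exp (-(1/2) * x ^ 2)) a,
    integral_gaussian]
  rw [show Real.pi / (1/2 : ℝ) = 2 * Real.pi by ring]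
  ring

lemma real_gauss_integrable (a : ℝ) :
    Integrable (fun x : ℝ => Real.exp (-x ^ 2 / 2 + a * x)) := by
  have h1 : ∀ x : ℝ, Real.exp (-x ^ 2 / 2 + a * x)
      = Real.exp (a ^ 2 / 2) * Real.exp (-(1/2) * (x - a) ^ 2) := by
    intro x; rw [← Real.exp_add]; ring_nf
  simp_rw [h1]
  exact ((integrable_exp_neg_mul_sq (by norm_num : (0:ℝ) < 1/2)).comp_sub_right a).const_mul _

lemma gaussian_density_eq :
    gaussianReal 0 1 = volume.withDensity
      (fun x => ((gaussianPDFReal 0 1 x).toNNReal : ENNReal)) := by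
  rw [gaussianReal_of_var_ne_zero 0 one_ne_zero]
  rfl

lemma pdf_mul (a : ℝ) (x : ℝ) :
    gaussianPDFReal 0 1 x * Real.exp (a * x)
      = (Real.sqrt (2 * Real.pi))⁻¹ * Real.exp (-x ^ 2 / 2 + a * x) := by
  simp only [gaussianPDFReal, NNReal.coe_one, mul_one, sub_zero, Real.exp_add]
  ring_nf

lemma gaussian_exp_integrable (a : ℝ) :
    Integrable (fun z : ℝ => Real.exp (a * z)) (gaussianReal 0 1) := by
  rw [gaussian_density_eq,
    integrable_withDensity_iff_integrable_smul ((measurable_gaussianPDFReal 0 1).real_toNNReal)]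
  have : ∀ x : ℝ, (gaussianPDFReal 0 1 x).toNNReal • Real.exp (a * x)
      = (Real.sqrt (2 * Real.pi))⁻¹ * Real.exp (-x ^ 2 / 2 + a * x) := by
    intro x
    rw [NNReal.smul_def, smul_eq_mul, Real.coe_toNNReal _ (gaussianPDFReal_nonneg 0 1 x), pdf_mul]
  simp_rw [this]
  exact (real_gauss_integrable a).const_mul _

lemma gaussian_exp_integral (a : ℝ) :
    ∫ z : ℝ, Real.exp (a * z) ∂(gaussianReal 0 1) = Real.exp (a ^ 2 / 2) := by
  rw [gaussian_density_eq,
    integral_withDensity_eq_integral_smul ((measurable_gaussianPDFReal 0 1).real_toNNReal)]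
  have : ∀ x : ℝ, (gaussianPDFReal 0 1 x).toNNReal • Real.exp (a * x)
      = (Real.sqrt (2 * Real.pi))⁻¹ * Real.exp (-x ^ 2 / 2 + a * x) := by
    intro x
    rw [NNReal.smul_def, smul_eq_mul, Real.coe_toNNReal _ (gaussianPDFReal_nonneg 0 1 x), pdf_mul]
  simp_rw [this]
  rw [integral_const_mul, real_gauss_integral, ← mul_assoc,
    inv_mul_cancel₀ (by positivity : Real.sqrt (2 * Real.pi) ≠ 0), one_mul]

theorem gsls_expected_gain_gbm (I₀ K α β σ μ t : ℝ)
    (hI : 0 < I₀) (hK : 0 < K) (hα : 0 < α) (hβ : 0 < β) (ht : 0 ≤ t) :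
    ∫ z : ℝ,
        ((I₀ / K) * (Real.exp ((K * μ - K ^ 2 * σ ^ 2 / 2) * t + K * σ * Real.sqrt t * z) - 1) +
          (α * I₀ / (β * K)) *
            (Real.exp ((-(β * K * μ) - β ^ 2 * K ^ 2 * σ ^ 2 / 2) * t - β * K * σ * Real.sqrt t * z) - 1))
        ∂(gaussianReal 0 1) =
      (I₀ / K) * (Real.exp (K * μ * t) - 1 + (α / β) * (Real.exp (-(β * K * μ) * t) - 1)) := by
  have hst : Real.sqrt t ^ 2 = t := Real.sq_sqrt ht
  set a1 := K * σ * Real.sqrt t with ha1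
  set a2 := -(β * K * σ * Real.sqrt t) with ha2
  set c1 := (K * μ - K ^ 2 * σ ^ 2 / 2) * t with hc1
  set c2 := (-(β * K * μ) - β ^ 2 * K ^ 2 * σ ^ 2 / 2) * t with hc2
  have h0 : ∀ z : ℝ, c2 - β * K * σ * Real.sqrt t * z = c2 + a2 * z := by
    intro z; rw [ha2]; ring
  have h1 : ∀ z : ℝ,
      ((I₀ / K) * (Real.exp (c1 + a1 * z) - 1) +
        (α * I₀ / (β * K)) * (Real.exp (c2 + a2 * z) - 1))
      = (I₀ / K * Real.exp c1) * Real.exp (a1 * z)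
        + ((α * I₀ / (β * K) * Real.exp c2) * Real.exp (a2 * z)
          + (-(I₀ / K) - α * I₀ / (β * K))) := by
    intro z
    rw [Real.exp_add, Real.exp_add]; ring
  simp_rw [h0, h1]
  have i2 : Integrable (fun z : ℝ => α * I₀ / (β * K) * Real.exp c2 * Real.exp (a2 * z))
      (gaussianReal 0 1) := by
    simpa [mul_assoc] using ((gaussian_exp_integrable a2).const_mul (α * I₀ / (β * K) * Real.exp c2))
  have i1 : Integrable (fun z : ℝ => I₀ / K * Real.exp c1 * Real.exp (a1 * z))
      (gaussianReal 0 1) := by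
    simpa [mul_assoc] using ((gaussian_exp_integrable a1).const_mul (I₀ / K * Real.exp c1))
  have i3 : Integrable (fun _ : ℝ => -(I₀ / K) - α * I₀ / (β * K)) (gaussianReal 0 1) :=
    integrable_const _
  have i23 : Integrable (fun z : ℝ => α * I₀ / (β * K) * Real.exp c2 * Real.exp (a2 * z)
      + (-(I₀ / K) - α * I₀ / (β * K))) (gaussianReal 0 1) := i2.add i3
  rw [integral_add i1 i23, integral_add i2 i3,
    integral_const_mul, integral_const_mul, gaussian_exp_integral, gaussian_exp_integral,
    integral_const]
  simp only [measure_univ, probReal_univ, ENNReal.toReal_one, smul_eq_mul, one_mul]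
  rw [mul_assoc, mul_assoc, ← Real.exp_add, ← Real.exp_add, hc1, hc2, ha1, ha2]
  have e1 : (K * μ - K ^ 2 * σ ^ 2 / 2) * t + (K * σ * Real.sqrt t) ^ 2 / 2 = K * μ * t := by
    rw [mul_pow, mul_pow, hst]; ring
  have e2 : (-(β * K * μ) - β ^ 2 * K ^ 2 * σ ^ 2 / 2) * t
      + (-(β * K * σ * Real.sqrt t)) ^ 2 / 2 = -(β * K * μ) * t := by
    rw [neg_sq, mul_pow, mul_pow, mul_pow, hst]; ring
  rw [e1, e2]
  field_simp
  ring
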